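/- If β3 > β3^th (so c > 0) and β1 > β1^th + 2η + 2√(η(β1^th + η)) where η = r_A r_N (β3 - β3^th)/(K_A l_A²), then the quadratic a A² + b A + c = 0 (with a = β1 r_A/K_A, b = l_A(β1^th - β1), c = r_N(β3 - β3^th)) has two distinct positive real roots. -/

import Mathlib

theorem two_positive_roots
    (rN μN β1 rA KA β3 μA εA : ℝ)
    (hrN : 0 < rN) (hμN : 0 < μN) (hβ1 : 0 < β1) (hrA : 0 < rA)
    (hKA : 0 < KA) (hβ3 : 0 < β3) (hμA : 0 < μA) (hεA : 0 < εA)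
    (lA β1th β3th η a b c : ℝ)
    (hlA : lA = rA - (μA + εA)) (hlApos : 0 < lA)
    (hβ1th : β1th = μN * rA / (lA * KA))
    (hβ3th : β3th = μN * lA / rN)
    (hη : η = rA * rN * (β3 - β3th) / (KA * lA ^ 2))
    (ha : a = β1 * rA / KA)
    (hb : b = lA * (β1th - β1))
    (hc : c = rN * (β3 - β3th))
    (h3 : β3 > β3th)
    (h1 : β1 > β1th + 2 * η + 2 * Real.sqrt (η * (β1th + η))) :
    ∃ A1 A2 : ℝ, 0 < A1 ∧ A1 < A2 ∧
      a * A1 ^ 2 + b * A1 + c = 0 ∧ a * A2 ^ 2 + b * A2 + c = 0 := by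
  have hβ1thpos : 0 < β1th := by rw [hβ1th]; positivity
  have hηpos : 0 < η := by
    rw [hη]
    apply div_pos
    · have h3' : 0 < β3 - β3th := by linarith
      positivity
    · positivity
  have hapos : 0 < a := by rw [ha]; positivity
  have hcpos : 0 < c := by rw [hc]; nlinarith
  set s := Real.sqrt (η * (β1th + η)) with hs
  have hs0 : 0 ≤ s := Real.sqrt_nonneg _
  have hs2 : s ^ 2 = η * (β1th + η) := Real.sq_sqrt (by positivity)
  have hac : 4 * a * c = 4 * η * β1 * lA ^ 2 := by
    rw [ha, hc, hη]
    field_simp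
  have hD : 0 < b ^ 2 - 4 * a * c := by
    have hb2 : b ^ 2 = lA ^ 2 * (β1 - β1th) ^ 2 := by rw [hb]; ring
    have h1' : 0 < β1 - β1th - 2*η - 2*s := by linarith
    have h2' : 0 < β1 - β1th - 2*η + 2*s := by linarith
    have hp := mul_pos h1' h2'
    nlinarith [mul_pos (mul_pos hlApos hlApos) hp]
  set sd := Real.sqrt (b ^ 2 - 4 * a * c) with hsd
  have hsdpos : 0 < sd := Real.sqrt_pos.mpr hD
  have hsd2 : sd ^ 2 = b ^ 2 - 4 * a * c := Real.sq_sqrt hD.le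
  have hbneg : b < 0 := by
    rw [hb]; nlinarith
  have hsdlt : sd < -b := by
    have hac4 : 0 < a * c := mul_pos hapos hcpos
    have hnb : (-b) ^ 2 = b ^ 2 := by ring
    have hlt : sd ^ 2 < (-b) ^ 2 := by rw [hnb, hsd2]; linarith
    exact lt_of_pow_lt_pow_left₀ 2 (by linarith) hlt
  refine ⟨(-b - sd) / (2 * a), (-b + sd) / (2 * a), ?_, ?_, ?_, ?_⟩
  · apply div_pos (by linarith) (by linarith)
  · exact (div_lt_div_iff_of_pos_right (by linarith)).mpr (by linarith)
  · have ha' : a ≠ 0 := ne_of_gt hapos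
    clear_value sd
    clear hβ1th hβ3th hη ha hb hc hlA hac hs2 h1 hs0 hD hβ1thpos hηpos hbneg hsdlt hsdpos hcpos
    field_simp
    linear_combination hsd2
  · have ha' : a ≠ 0 := ne_of_gt hapos
    clear_value sd
    clear hβ1th hβ3th hη ha hb hc hlA hac hs2 h1 hs0 hD hβ1thpos hηpos hbneg hsdlt hsdpos hcpos
    field_simp
    linear_combination hsd2
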